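/- Let G be a finite group. If |G| divides m_G(H) for every subgroup H ≤ G, then G is nilpotent. -/

import Mathlib

/-- The Chermak–Delgado measure of a subgroup `H` of `G`: `m_G(H) = |H| * |C_G(H)|`. -/
noncomputable def cdMeasure {G : Type*} [Group G] (H : Subgroup G) : ℕ :=
  Nat.card H * Nat.card (Subgroup.centralizer (H : Set G))

/-- `m*(G)`, the maximal Chermak–Delgado measure over all subgroups of `G`. -/
noncomputable def cdMax (G : Type*) [Group G] : ℕ :=
  sSup (Set.range (cdMeasure (G := G)))

/-- The Chermak–Delgado lattice of `G`, as the set of subgroups attaining `m*(G)`. -/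
def cdLattice (G : Type*) [Group G] : Set (Subgroup G) :=
  {H : Subgroup G | cdMeasure H = cdMax G}

lemma centralizer_le_normalizer' {G : Type*} [Group G] (H : Subgroup G) :
    Subgroup.centralizer (H : Set G) ≤ Subgroup.normalizer (H : Set G) := by
  intro g hg
  rw [Subgroup.mem_normalizer_iff]
  intro x
  have key : ∀ y ∈ H, g * y * g⁻¹ = y := by
    intro y hy
    have := (Subgroup.mem_centralizer_iff.mp hg) y hy
    rw [← this]
    group
  constructor
  · intro hx
    rw [key x hx]
    exact hx
  · intro hx
    have hcomm := (Subgroup.mem_centralizer_iff.mp hg) _ hx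
    have hx3 : g⁻¹ * (g * x * g⁻¹) * g = x := by group
    rw [← hx3, mul_assoc, hcomm, ← mul_assoc, inv_mul_cancel, one_mul]
    exact hx

/-- If `|G|` divides `m_G(H)` for every subgroup `H ≤ G`, then `G` is nilpotent. -/
theorem isNilpotent_of_forall_card_dvd_cdMeasure (G : Type*) [Group G] [Finite G]
    (h : ∀ H : Subgroup G, Nat.card G ∣ cdMeasure H) : Group.IsNilpotent G := by
  have key : ∀ (p : ℕ) (_hp : Fact p.Prime) (P : Sylow p G), (↑P : Subgroup G).Normal := by
    intro p hp P
    rw [← Subgroup.normalizer_eq_top_iff]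
    set N := Subgroup.normalizer ((P : Subgroup G) : Set G)
    have hn0 : Nat.card G ≠ 0 := Nat.card_pos.ne'
    have hPcard : Nat.card (P : Subgroup G) = p ^ (Nat.card G).factorization p :=
      Sylow.card_eq_multiplicity P
    have hdvd := h (P : Subgroup G)
    rw [cdMeasure, hPcard] at hdvd
    have hsplit : p ^ (Nat.card G).factorization p * (Nat.card G / p ^ (Nat.card G).factorization p)
        = Nat.card G := Nat.ordProj_mul_ordCompl_eq_self _ p
    have hm : (Nat.card G / p ^ (Nat.card G).factorization p) ∣
        Nat.card (Subgroup.centralizer ((P : Subgroup G) : Set G)) := by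
      have : p ^ (Nat.card G).factorization p * (Nat.card G / p ^ (Nat.card G).factorization p) ∣
          p ^ (Nat.card G).factorization p * Nat.card (Subgroup.centralizer ((P : Subgroup G) : Set G)) := by
        rw [hsplit]; exact hdvd
      exact (Nat.mul_dvd_mul_iff_left (Nat.pow_pos hp.out.pos)).mp this
    have hmN : (Nat.card G / p ^ (Nat.card G).factorization p) ∣ Nat.card N :=
      hm.trans (Subgroup.card_dvd_of_le (centralizer_le_normalizer' _))
    have hpN : p ^ (Nat.card G).factorization p ∣ Nat.card N := by
      rw [← hPcard]
      exact Subgroup.card_dvd_of_le Subgroup.le_normalizer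
    have hcop : Nat.Coprime (p ^ (Nat.card G).factorization p)
        (Nat.card G / p ^ (Nat.card G).factorization p) :=
      Nat.Coprime.pow_left _ (Nat.coprime_ordCompl hp.out hn0)
    have hGN : Nat.card G ∣ Nat.card N := by
      rw [← hsplit]
      exact Nat.Coprime.mul_dvd_of_dvd_of_dvd hcop hpN hmN
    exact Subgroup.eq_top_of_card_eq N (Nat.dvd_antisymm (Subgroup.card_subgroup_dvd_card N) hGN)
  exact ((isNilpotent_of_finite_tfae (G := G)).out 3 0).mp key
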